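/- Let G be a finite simple graph, let k, ℓ be natural numbers, and let X, Y be disjoint vertex sets of G such that every neighbor of a vertex of Y lies in X (N(Y) ⊆ X), and suppose there is an (ℓ+1)-expansion M of X into Y in the bipartite subgraph of G between X and Y. Then G has a vertex set S with |S| ≤ k such that G − S has at most ℓ edges if and only if the graph G − (X ∪ Y) has a vertex set S′ with |S′| ≤ k − |X| such that (G − (X ∪ Y)) − S′ has at most ℓ edges. -/

import Mathlib

/-- The graph obtained from `G` by deleting the vertices in `S`. -/
def SimpleGraph.delVerts {V : Type*} (G : SimpleGraph V) (S : Set V) : SimpleGraph V where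
  Adj a b := G.Adj a b ∧ a ∉ S ∧ b ∉ S
  symm := ⟨fun _ _ h => ⟨h.1.symm, h.2.2, h.2.1⟩⟩
  loopless := ⟨fun a h => G.loopless.irrefl a h.1⟩

/-- Safeness of removing an `(ℓ+1)`-expansion `M` of `X` into `Y` (where `N(Y) ⊆ X`):
`G` has a set `S` of at most `k` vertices whose deletion leaves at most `ℓ` edges
iff `G - (X ∪ Y)` has such a set `S'` of at most `k - |X|` vertices. -/
theorem expansion_rule_safe {V : Type*} [Fintype V] [DecidableEq V]
    (G : SimpleGraph V) (k ℓ : ℕ) (X Y : Finset V) (hXY : Disjoint X Y)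
    (hNY : ∀ y ∈ Y, ∀ v : V, G.Adj y v → v ∈ X)
    (M : Finset (V × V))
    (hM : ∀ p ∈ M, p.1 ∈ X ∧ p.2 ∈ Y ∧ G.Adj p.1 p.2)
    (hMX : ∀ x ∈ X, (M.filter (fun p => p.1 = x)).card = ℓ + 1)
    (hMY : ∀ y ∈ Y, (M.filter (fun p => p.2 = y)).card ≤ 1) :
    (∃ S : Finset V, S.card ≤ k ∧ (G.delVerts ↑S).edgeSet.ncard ≤ ℓ) ↔
    (∃ S' : Finset V, Disjoint S' (X ∪ Y) ∧ (S'.card : ℤ) ≤ (k : ℤ) - X.card ∧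
      ((G.delVerts ↑(X ∪ Y)).delVerts ↑S').edgeSet.ncard ≤ ℓ) := by
  classical
  have hmono : ∀ (H H' : SimpleGraph V), H ≤ H' →
      H.edgeSet.ncard ≤ H'.edgeSet.ncard := fun H H' h =>
    Set.ncard_le_ncard (SimpleGraph.edgeSet_mono h) (Set.toFinite _)
  constructor
  · rintro ⟨S, hSk, hSe⟩
    -- injectivity of second projection on M
    have hy2 : ∀ p ∈ M, ∀ q ∈ M, p.2 = q.2 → p = q := by
      intro p hp q hq hpq
      by_contra hne
      have h1 : 1 < (M.filter (fun r => r.2 = p.2)).card :=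
        Finset.one_lt_card_iff.mpr ⟨p, q, by simp [hp], by simp [hq, hpq], hne⟩
      have := hMY p.2 (hM p hp).2.1
      omega
    set A : Finset V := X \ S with hA
    set B : Finset (V × V) := M.filter (fun p => p.1 ∈ A) with hBdef
    have hB : B.card = A.card * (ℓ + 1) := by
      have hbu : B = A.biUnion (fun x => M.filter (fun p => p.1 = x)) := by
        ext p
        simp only [hBdef, Finset.mem_filter, Finset.mem_biUnion]
        constructor
        · rintro ⟨hp, hpa⟩; exact ⟨p.1, hpa, by simp [hp]⟩
        · rintro ⟨x, hx, hp, hpx⟩; exact ⟨hp, hpx ▸ hx⟩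
      rw [hbu, Finset.card_biUnion]
      · rw [Finset.sum_congr rfl (fun x hx => hMX x (Finset.mem_sdiff.mp hx).1)]
        simp [mul_comm, hA]
      · intro x _ y _ hxy
        simp only [Finset.disjoint_left, Finset.mem_filter]
        rintro p ⟨_, rfl⟩ ⟨_, h⟩
        exact hxy h
    have hsplit := Finset.card_filter_add_card_filter_not
      (s := B) (p := fun p => p.2 ∈ S)
    set C : Finset (V × V) := B.filter (fun p => p.2 ∈ S) with hCdef
    set M' : Finset (V × V) := B.filter (fun p => ¬ p.2 ∈ S) with hM'def
    have hC : C.card ≤ (S ∩ Y).card := by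
      apply Finset.card_le_card_of_injOn (fun p => p.2)
      · intro p hp
        simp only [hCdef, hBdef, Finset.mem_coe, Finset.mem_filter] at hp
        exact Finset.mem_inter.mpr ⟨hp.2, (hM p hp.1.1).2.1⟩
      · intro p hp q hq h
        simp only [hCdef, hBdef, Finset.mem_coe, Finset.mem_filter] at hp hq
        exact hy2 p hp.1.1 q hq.1.1 h
    have hM'card : M'.card ≤ ℓ := by
      have hfin : (G.delVerts ↑S).edgeSet.Finite := Set.toFinite _
      have hcard : hfin.toFinset.card ≤ ℓ := by
        rwa [← Set.ncard_eq_toFinset_card _ hfin]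
      refine le_trans (Finset.card_le_card_of_injOn (fun p => s(p.1, p.2)) ?_ ?_) hcard
      · intro p hp
        simp only [hM'def, hBdef, Finset.mem_coe, Finset.mem_filter] at hp
        obtain ⟨⟨hpM, hpA⟩, hpS⟩ := hp
        rw [Finset.mem_coe, Set.Finite.mem_toFinset, SimpleGraph.mem_edgeSet]
        refine ⟨(hM p hpM).2.2, ?_, ?_⟩
        · simpa using (Finset.mem_sdiff.mp hpA).2
        · simpa using hpS
      · intro p hp q hq h
        simp only [hM'def, hBdef, Finset.mem_coe, Finset.mem_filter] at hp hq
        rw [Sym2.eq_iff] at h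
        rcases h with ⟨h1, h2⟩ | ⟨h1, h2⟩
        · exact Prod.ext h1 h2
        · exfalso
          have hp1X : p.1 ∈ X := (hM p hp.1.1).1
          have hq2Y : q.2 ∈ Y := (hM q hq.1.1).2.1
          exact Finset.disjoint_left.mp hXY hp1X (h1 ▸ hq2Y)
    -- key inequality
    have hkey : A.card ≤ (S ∩ Y).card := by
      have hineq : A.card * (ℓ + 1) ≤ (S ∩ Y).card + ℓ := by omega
      rcases Nat.eq_zero_or_pos A.card with h0 | h1
      · omega
      · nlinarith
    refine ⟨S \ (X ∪ Y), Finset.sdiff_disjoint, ?_, ?_⟩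
    · have e1 := Finset.card_sdiff_add_card_inter S (X ∪ Y)
      have e2 : (S ∩ (X ∪ Y)).card = (S ∩ X).card + (S ∩ Y).card := by
        rw [Finset.inter_union_distrib_left]
        exact Finset.card_union_of_disjoint
          (Finset.disjoint_of_subset_left Finset.inter_subset_right
            (Finset.disjoint_of_subset_right Finset.inter_subset_right hXY))
      have e3 : (X ∩ S).card + A.card = X.card := Finset.card_inter_add_card_sdiff X S
      have e4 : (X ∩ S).card = (S ∩ X).card := by rw [Finset.inter_comm]
      omega
    · refine le_trans (hmono _ _ ?_) hSe
      rintro a b ⟨⟨hadj, haXY, hbXY⟩, haS, hbS⟩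
      refine ⟨hadj, fun ha => ?_, fun hb => ?_⟩
      · exact haS (by simp_all [Finset.mem_sdiff])
      · exact hbS (by simp_all [Finset.mem_sdiff])
  · rintro ⟨S', hd, hcard, hSe⟩
    have hdX : Disjoint X S' :=
      (Finset.disjoint_of_subset_right Finset.subset_union_left hd).symm
    refine ⟨X ∪ S', ?_, ?_⟩
    · have := Finset.card_union_of_disjoint hdX
      omega
    · refine le_trans (hmono _ _ ?_) hSe
      rintro a b ⟨hadj, haXS, hbXS⟩
      simp only [Finset.coe_union, Set.mem_union, Finset.mem_coe] at haXS hbXS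
      push_neg at haXS hbXS
      have haY : a ∉ Y := fun h => hbXS.1 (hNY a h b hadj)
      have hbY : b ∉ Y := fun h => haXS.1 (hNY b h a hadj.symm)
      exact ⟨⟨hadj, by simp [haXS.1, haY], by simp [hbXS.1, hbY]⟩, haXS.2, hbXS.2⟩
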